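/- Let x, y, z be unit vectors in a real inner product space. Then ⟨x,z⟩ ≤ ⟨x,y⟩·⟨y,z⟩ + √(1-⟨x,y⟩²)·√(1-⟨y,z⟩²). -/

import Mathlib

theorem inner_transitive_upper {E : Type*} [NormedAddCommGroup E] [InnerProductSpace ℝ E]
    (x y z : E) (hx : ‖x‖ = 1) (hy : ‖y‖ = 1) (hz : ‖z‖ = 1) :
    (inner ℝ x z : ℝ) ≤ (inner ℝ x y : ℝ) * (inner ℝ y z : ℝ) +
      Real.sqrt (1 - (inner ℝ x y : ℝ) ^ 2) * Real.sqrt (1 - (inner ℝ y z : ℝ) ^ 2) := by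
  set a : ℝ := inner ℝ x y with ha
  set b : ℝ := inner ℝ y z with hb
  have hyx : (inner ℝ y x : ℝ) = a := real_inner_comm x y
  have hyz : (inner ℝ y z : ℝ) = b := rfl
  have hzy : (inner ℝ z y : ℝ) = b := real_inner_comm y z
  have hyy : (inner ℝ y y : ℝ) = 1 := by
    rw [real_inner_self_eq_norm_sq, hy]; norm_num
  have key : (inner ℝ (x - a • y) (z - b • y) : ℝ) = inner ℝ x z - a * b := by
    simp only [inner_sub_sub_self, inner_smul_left, inner_smul_right, real_inner_comm y x,
      inner_sub_left, inner_sub_right, RCLike.conj_to_real]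
    rw [hyy, hyx, hyz]
    ring
  have hnx : ‖x - a • y‖ ^ 2 = 1 - a ^ 2 := by
    rw [← real_inner_self_eq_norm_sq]
    simp only [inner_sub_sub_self, inner_smul_left, inner_smul_right, RCLike.conj_to_real]
    rw [hyy, real_inner_self_eq_norm_sq, hx, hyx]
    ring
  have hnz : ‖z - b • y‖ ^ 2 = 1 - b ^ 2 := by
    rw [← real_inner_self_eq_norm_sq]
    simp only [inner_sub_sub_self, inner_smul_left, inner_smul_right, RCLike.conj_to_real]
    rw [hyy, real_inner_self_eq_norm_sq, hz, hyz, hzy]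
    ring
  have hcs := real_inner_le_norm (x - a • y) (z - b • y)
  have hx' : ‖x - a • y‖ = Real.sqrt (1 - a ^ 2) := by
    rw [← hnx, Real.sqrt_sq (norm_nonneg _)]
  have hz' : ‖z - b • y‖ = Real.sqrt (1 - b ^ 2) := by
    rw [← hnz, Real.sqrt_sq (norm_nonneg _)]
  rw [key, hx', hz'] at hcs
  linarith
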